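/- For every positive integer n, 11 σ_9(n) = 21 σ_5(n) - 10 σ_3(n) + 5040 ∑_{m=1}^{n-1} σ_3(m) σ_5(n-m). -/
import Mathlib

open Finset

/-- The solution set `{(a,x,b,y) : ax+by = n, all positive}`. -/
def sQuad (n : ℕ) : Finset (ℕ × ℕ × ℕ × ℕ) :=
  ((range (n+1)) ×ˢ (range (n+1)) ×ˢ (range (n+1)) ×ˢ (range (n+1))).filter
    (fun p => p.1 * p.2.1 + p.2.2.1 * p.2.2.2 = n ∧
      0 < p.1 ∧ 0 < p.2.1 ∧ 0 < p.2.2.1 ∧ 0 < p.2.2.2)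

lemma mem_sQuad {n : ℕ} {p : ℕ × ℕ × ℕ × ℕ} :
    p ∈ sQuad n ↔ p.1 * p.2.1 + p.2.2.1 * p.2.2.2 = n ∧
      0 < p.1 ∧ 0 < p.2.1 ∧ 0 < p.2.2.1 ∧ 0 < p.2.2.2 := by
  obtain ⟨a, x, b, y⟩ := p
  simp only [sQuad, mem_filter, mem_product, mem_range]
  constructor
  · tauto
  · rintro ⟨h, ha, hx, hb, hy⟩
    refine ⟨⟨?_, ?_, ?_, ?_⟩, h, ha, hx, hb, hy⟩ <;> nlinarith


lemma sum_sQuad_conv (n : ℕ) (f g : ℕ → ℤ) :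
    ∑ p ∈ sQuad n, f p.1 * g p.2.2.1
      = ∑ m ∈ Ico 1 n, (∑ i ∈ Nat.divisorsAntidiagonal m, f i.1) *
          (∑ j ∈ Nat.divisorsAntidiagonal (n - m), g j.1) := by
  symm
  calc ∑ m ∈ Ico 1 n, (∑ i ∈ Nat.divisorsAntidiagonal m, f i.1) *
          (∑ j ∈ Nat.divisorsAntidiagonal (n - m), g j.1)
      = ∑ m ∈ Ico 1 n, ∑ z ∈ Nat.divisorsAntidiagonal m ×ˢ Nat.divisorsAntidiagonal (n - m),
          f z.1.1 * g z.2.1 := by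
        refine sum_congr rfl fun m _ => ?_
        rw [sum_mul_sum, sum_product]
    _ = ∑ z ∈ (Ico 1 n).sigma
          (fun m => Nat.divisorsAntidiagonal m ×ˢ Nat.divisorsAntidiagonal (n - m)),
          f z.2.1.1 * g z.2.2.1 := by
        rw [Finset.sum_sigma]
    _ = ∑ p ∈ sQuad n, f p.1 * g p.2.2.1 := by
        refine sum_nbij' (fun z => (z.2.1.1, z.2.1.2, z.2.2.1, z.2.2.2))
          (fun p => ⟨p.1 * p.2.1, ((p.1, p.2.1), (p.2.2.1, p.2.2.2))⟩) ?_ ?_ ?_ ?_ ?_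
        · rintro ⟨m, ⟨⟨a, x⟩, ⟨b, y⟩⟩⟩ hz
          simp only [mem_sigma, mem_product, Nat.mem_divisorsAntidiagonal, mem_Ico] at hz
          obtain ⟨⟨hm1, hm2⟩, ⟨hax, hm0⟩, ⟨hby, hnm0⟩⟩ := hz
          rw [mem_sQuad]
          dsimp only
          refine ⟨by omega, ?_, ?_, ?_, ?_⟩
          · exact Nat.pos_of_ne_zero (by rintro rfl; simp at hax; omega)
          · exact Nat.pos_of_ne_zero (by rintro rfl; simp at hax; omega)
          · exact Nat.pos_of_ne_zero (by rintro rfl; simp at hby; omega)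
          · exact Nat.pos_of_ne_zero (by rintro rfl; simp at hby; omega)
        · rintro ⟨a, x, b, y⟩ hp
          rw [mem_sQuad] at hp
          obtain ⟨h, ha, hx, hb, hy⟩ := hp
          dsimp only at *
          have h1 : 1 ≤ a * x := Nat.mul_pos ha hx
          have h2 : 1 ≤ b * y := Nat.mul_pos hb hy
          simp only [mem_sigma, mem_product, Nat.mem_divisorsAntidiagonal, mem_Ico]
          refine ⟨⟨h1, by omega⟩, ⟨by trivial, by omega⟩, ⟨by omega, by omega⟩⟩
        · rintro ⟨m, ⟨⟨a, x⟩, ⟨b, y⟩⟩⟩ hz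
          simp only [mem_sigma, mem_product, Nat.mem_divisorsAntidiagonal, mem_Ico] at hz
          obtain ⟨⟨hm1, hm2⟩, ⟨hax, hm0⟩, ⟨hby, hnm0⟩⟩ := hz
          simp [hax]
        · rintro ⟨a, x, b, y⟩ _
          rfl
        · rintro ⟨m, ⟨⟨a, x⟩, ⟨b, y⟩⟩⟩ _
          rfl

lemma sum_sQuad_tau (n : ℕ) (F : ℕ × ℕ × ℕ × ℕ → ℤ) :
    ∑ p ∈ sQuad n, F p = ∑ p ∈ sQuad n, F (p.2.1, p.1, p.2.2.2, p.2.2.1) := by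
  have hmem : ∀ p ∈ sQuad n, (p.2.1, p.1, p.2.2.2, p.2.2.1) ∈ sQuad n := by
    rintro ⟨a, x, b, y⟩ hp
    rw [mem_sQuad] at hp ⊢
    dsimp only at *
    obtain ⟨h, ha, hx, hb, hy⟩ := hp
    rw [mul_comm x a, mul_comm y b]
    exact ⟨h, hx, ha, hy, hb⟩
  have hinv : ∀ p ∈ sQuad n,
      ((p.2.1, p.1, p.2.2.2, p.2.2.1) : ℕ × ℕ × ℕ × ℕ).2.1 = p.1 ∧ True := fun _ _ => ⟨rfl, trivial⟩
  refine sum_nbij' (fun p => (p.2.1, p.1, p.2.2.2, p.2.2.1))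
    (fun p => (p.2.1, p.1, p.2.2.2, p.2.2.1)) hmem hmem ?_ ?_ ?_
  · rintro ⟨a, x, b, y⟩ _; rfl
  · rintro ⟨a, x, b, y⟩ _; rfl
  · rintro ⟨a, x, b, y⟩ _; rfl

lemma sum_sQuad_split (n : ℕ) (F : ℕ × ℕ × ℕ × ℕ → ℤ) :
    ∑ p ∈ sQuad n, F p
      = ∑ p ∈ (sQuad n).filter (fun p => p.2.2.1 < p.1), F p
        + ∑ p ∈ (sQuad n).filter (fun p => p.1 = p.2.2.1), F p
        + ∑ p ∈ (sQuad n).filter (fun p => p.1 < p.2.2.1), F p := by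
  rw [← Finset.sum_filter_add_sum_filter_not (sQuad n) (fun p => p.2.2.1 < p.1) F]
  rw [← Finset.sum_filter_add_sum_filter_not
    ((sQuad n).filter (fun p => ¬ p.2.2.1 < p.1)) (fun p => p.1 = p.2.2.1) F]
  rw [Finset.filter_filter, Finset.filter_filter, add_assoc]
  congr 2
  · refine Finset.sum_congr ?_ (fun _ _ => rfl)
    apply Finset.filter_congr; intro p _; omega
  · refine Finset.sum_congr ?_ (fun _ _ => rfl)
    apply Finset.filter_congr; intro p _; omega

lemma sum_sQuad_LT (n : ℕ) (F : ℕ × ℕ × ℕ × ℕ → ℤ) :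
    ∑ p ∈ (sQuad n).filter (fun p => p.1 < p.2.2.1), F p
      = ∑ p ∈ (sQuad n).filter (fun p => p.2.2.1 < p.1), F (p.2.2.1, p.2.2.2, p.1, p.2.1) := by
  have hmem : ∀ (c : Prop) [Decidable c], True := fun _ _ => trivial
  refine sum_nbij' (fun p => (p.2.2.1, p.2.2.2, p.1, p.2.1))
    (fun p => (p.2.2.1, p.2.2.2, p.1, p.2.1)) ?_ ?_ ?_ ?_ ?_
  · rintro ⟨a, x, b, y⟩ hp
    simp only [mem_filter, mem_sQuad] at hp ⊢
    obtain ⟨⟨h, ha, hx, hb, hy⟩, hab⟩ := hp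
    exact ⟨⟨by omega, hb, hy, ha, hx⟩, hab⟩
  · rintro ⟨a, x, b, y⟩ hp
    simp only [mem_filter, mem_sQuad] at hp ⊢
    obtain ⟨⟨h, ha, hx, hb, hy⟩, hab⟩ := hp
    exact ⟨⟨by omega, hb, hy, ha, hx⟩, hab⟩
  · rintro ⟨a, x, b, y⟩ _; rfl
  · rintro ⟨a, x, b, y⟩ _; rfl
  · rintro ⟨a, x, b, y⟩ _; rfl

lemma sum_sQuad_chi (n : ℕ) (F : ℕ × ℕ × ℕ × ℕ → ℤ) :
    ∑ p ∈ (sQuad n).filter (fun p => p.2.2.1 < p.1), F p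
      = ∑ p ∈ (sQuad n).filter (fun p => p.2.2.1 < p.1),
          F (p.2.1 + p.2.2.2, p.2.2.1, p.2.1, p.1 - p.2.2.1) := by
  have hmem : ∀ p ∈ (sQuad n).filter (fun p => p.2.2.1 < p.1),
      ((p.2.1 + p.2.2.2, p.2.2.1, p.2.1, p.1 - p.2.2.1) : ℕ × ℕ × ℕ × ℕ)
        ∈ (sQuad n).filter (fun p => p.2.2.1 < p.1) := by
    rintro ⟨a, x, b, y⟩ hp
    simp only [mem_filter, mem_sQuad] at hp ⊢
    obtain ⟨⟨h, ha, hx, hb, hy⟩, hba⟩ := hp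
    have hble : b ≤ a := le_of_lt hba
    refine ⟨⟨?_, by omega, hb, hx, by omega⟩, by omega⟩
    have hz : (a : ℤ) * x + (b : ℤ) * y = (n : ℤ) := by exact_mod_cast h
    zify [hble]
    linear_combination hz
  have hinv : ∀ p ∈ (sQuad n).filter (fun p => p.2.2.1 < p.1),
      ((((p.2.1 + p.2.2.2, p.2.2.1, p.2.1, p.1 - p.2.2.1) : ℕ × ℕ × ℕ × ℕ).2.1
          + (p.2.1 + p.2.2.2, p.2.2.1, p.2.1, p.1 - p.2.2.1).2.2.2,
        (p.2.1 + p.2.2.2, p.2.2.1, p.2.1, p.1 - p.2.2.1).2.2.1,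
        (p.2.1 + p.2.2.2, p.2.2.1, p.2.1, p.1 - p.2.2.1).2.1,
        (p.2.1 + p.2.2.2, p.2.2.1, p.2.1, p.1 - p.2.2.1).1
          - (p.2.1 + p.2.2.2, p.2.2.1, p.2.1, p.1 - p.2.2.1).2.2.1) : ℕ × ℕ × ℕ × ℕ) = p := by
    rintro ⟨a, x, b, y⟩ hp
    simp only [mem_filter, mem_sQuad] at hp
    dsimp only at *
    obtain ⟨⟨h, ha, hx, hb, hy⟩, hba⟩ := hp
    simp only [Prod.mk.injEq, true_and, and_true]
    omega
  refine sum_nbij' (fun p => (p.2.1 + p.2.2.2, p.2.2.1, p.2.1, p.1 - p.2.2.1))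
    (fun p => (p.2.1 + p.2.2.2, p.2.2.1, p.2.1, p.1 - p.2.2.1)) hmem hmem hinv hinv ?_
  · intro p hp
    rw [hinv p hp]

lemma sum_sQuad_EQ (n : ℕ) (hn : 0 < n) (F : ℕ × ℕ × ℕ × ℕ → ℤ) :
    ∑ p ∈ (sQuad n).filter (fun p => p.1 = p.2.2.1), F p
      = ∑ e ∈ n.divisors, ∑ x ∈ Ico 1 e, F (n / e, x, n / e, e - x) := by
  rw [← Finset.sum_sigma (n.divisors) (fun e => Ico 1 e)
    (fun z => F (n / z.1, z.2, n / z.1, z.1 - z.2))]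
  refine sum_nbij' (fun p => ⟨p.2.1 + p.2.2.2, p.2.1⟩)
    (fun z => (n / z.1, z.2, n / z.1, z.1 - z.2)) ?_ ?_ ?_ ?_ ?_
  · rintro ⟨a, x, b, y⟩ hp
    simp only [mem_filter, mem_sQuad] at hp
    obtain ⟨⟨h, ha, hx, hb, hy⟩, hab⟩ := hp
    dsimp only at *
    simp only [mem_sigma, Nat.mem_divisors, mem_Ico]
    refine ⟨⟨⟨a, ?_⟩, hn.ne'⟩, hx, by omega⟩
    subst hab
    rw [← h]; ring
  · rintro ⟨e, x⟩ hz
    simp only [mem_sigma, Nat.mem_divisors, mem_Ico] at hz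
    obtain ⟨⟨hdvd, hn0⟩, hx1, hxe⟩ := hz
    dsimp only at *
    have he : 0 < e := by omega
    have hne : 0 < n / e := Nat.div_pos (Nat.le_of_dvd hn hdvd) he
    simp only [mem_filter, mem_sQuad]
    refine ⟨⟨?_, hne, by omega, hne, by omega⟩, by trivial⟩
    have hsum : x + (e - x) = e := by omega
    rw [← Nat.left_distrib, hsum, Nat.div_mul_cancel hdvd]
  · rintro ⟨a, x, b, y⟩ hp
    simp only [mem_filter, mem_sQuad] at hp
    obtain ⟨⟨h, ha, hx, hb, hy⟩, hab⟩ := hp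
    dsimp only at *
    subst hab
    have hxy : a * (x + y) = n := by rw [← h]; ring
    have h1 : n / (x + y) = a :=
      Nat.div_eq_of_eq_mul_left (by omega) (by omega)
    have hy2 : x + y - x = y := by omega
    rw [h1, hy2]
  · rintro ⟨e, x⟩ hz
    simp only [mem_sigma, Nat.mem_divisors, mem_Ico] at hz
    obtain ⟨⟨hdvd, hn0⟩, hx1, hxe⟩ := hz
    dsimp only
    have hsum : x + (e - x) = e := by omega
    rw [hsum]
  · rintro ⟨a, x, b, y⟩ hp
    simp only [mem_filter, mem_sQuad] at hp
    obtain ⟨⟨h, ha, hx, hb, hy⟩, hab⟩ := hp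
    dsimp only at *
    subst hab
    have hxy : a * (x + y) = n := by rw [← h]; ring
    have h1 : n / (x + y) = a :=
      Nat.div_eq_of_eq_mul_left (by omega) (by omega)
    have hy2 : x + y - x = y := by omega
    rw [h1, hy2]

lemma powsum2 (e : ℕ) : 6 * ∑ x ∈ range e, (x : ℤ)^2 = 2*(e:ℤ)^3 - 3*(e:ℤ)^2 + e := by
  induction e with
  | zero => simp
  | succ m ih => rw [Finset.sum_range_succ]; push_cast; push_cast at ih; linear_combination ih

lemma powsum3 (e : ℕ) : 4 * ∑ x ∈ range e, (x : ℤ)^3 = (e:ℤ)^4 - 2*(e:ℤ)^3 + (e:ℤ)^2 := by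
  induction e with
  | zero => simp
  | succ m ih => rw [Finset.sum_range_succ]; push_cast; push_cast at ih; linear_combination ih

lemma powsum4 (e : ℕ) :
    30 * ∑ x ∈ range e, (x : ℤ)^4 = 6*(e:ℤ)^5 - 15*(e:ℤ)^4 + 10*(e:ℤ)^3 - e := by
  induction e with
  | zero => simp
  | succ m ih => rw [Finset.sum_range_succ]; push_cast; push_cast at ih; linear_combination ih

lemma powsum5 (e : ℕ) :
    12 * ∑ x ∈ range e, (x : ℤ)^5 = 2*(e:ℤ)^6 - 6*(e:ℤ)^5 + 5*(e:ℤ)^4 - (e:ℤ)^2 := by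
  induction e with
  | zero => simp
  | succ m ih => rw [Finset.sum_range_succ]; push_cast; push_cast at ih; linear_combination ih

lemma powsum6 (e : ℕ) :
    42 * ∑ x ∈ range e, (x : ℤ)^6
      = 6*(e:ℤ)^7 - 21*(e:ℤ)^6 + 21*(e:ℤ)^5 - 7*(e:ℤ)^3 + e := by
  induction e with
  | zero => simp
  | succ m ih => rw [Finset.sum_range_succ]; push_cast; push_cast at ih; linear_combination ih

lemma powsum7 (e : ℕ) :
    24 * ∑ x ∈ range e, (x : ℤ)^7
      = 3*(e:ℤ)^8 - 12*(e:ℤ)^7 + 14*(e:ℤ)^6 - 7*(e:ℤ)^4 + 2*(e:ℤ)^2 := by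
  induction e with
  | zero => simp
  | succ m ih => rw [Finset.sum_range_succ]; push_cast; push_cast at ih; linear_combination ih

/-- The inner Faulhaber-type evaluation. -/
lemma inner_eval (e : ℕ) :
    840 * ∑ x ∈ Ico 1 e,
        ((x:ℤ)^2 * ((e - x : ℕ) : ℤ)^6 + 3*(x:ℤ)^3 * ((e - x : ℕ) : ℤ)^5
          + 2*(x:ℤ)^4 * ((e - x : ℕ) : ℤ)^4)
      = 11*(e:ℤ)^9 - 21*(e:ℤ)^5 + 10*(e:ℤ)^3 := by
  have hsub : ∑ x ∈ Ico 1 e,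
      ((x:ℤ)^2 * ((e - x : ℕ) : ℤ)^6 + 3*(x:ℤ)^3 * ((e - x : ℕ) : ℤ)^5
        + 2*(x:ℤ)^4 * ((e - x : ℕ) : ℤ)^4)
      = ∑ x ∈ range e,
        ((e:ℤ)^6*(x:ℤ)^2 - 3*(e:ℤ)^5*(x:ℤ)^3 + 2*(e:ℤ)^4*(x:ℤ)^4 + 2*(e:ℤ)^3*(x:ℤ)^5
          - 3*(e:ℤ)^2*(x:ℤ)^6 + (e:ℤ)*(x:ℤ)^7) := by
    rw [← Finset.sum_subset (s₁ := Ico 1 e) (s₂ := range e) ?_ ?_]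
    · refine Finset.sum_congr rfl fun x hx => ?_
      simp only [mem_Ico] at hx
      have hxe : x ≤ e := le_of_lt hx.2
      have hc : ((e - x : ℕ) : ℤ) = (e : ℤ) - (x : ℤ) := by
        push_cast [hxe]; ring
      rw [hc]; ring
    · intro x hx
      simp only [mem_range, mem_Ico] at *
      omega
    · intro x hx hnx
      simp only [mem_range, mem_Ico] at *
      have : x = 0 := by omega
      subst this
      push_cast
      ring
  rw [hsub]
  simp only [Finset.sum_add_distrib, Finset.sum_sub_distrib]
  simp only [← Finset.mul_sum]
  linear_combination (140*(e:ℤ)^6) * powsum2 e - (630*(e:ℤ)^5) * powsum3 e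
    + (56*(e:ℤ)^4) * powsum4 e + (140*(e:ℤ)^3) * powsum5 e
    - (60*(e:ℤ)^2) * powsum6 e + (35*(e:ℤ)) * powsum7 e

lemma sigma_cast_eq (k n : ℕ) :
    (ArithmeticFunction.sigma k n : ℤ) = ∑ i ∈ Nat.divisorsAntidiagonal n, (i.1 : ℤ)^k := by
  rw [ArithmeticFunction.sigma_apply]
  rw [Nat.sum_divisorsAntidiagonal (fun d e => (d : ℤ)^k)]
  push_cast
  rfl

lemma sigma_cast_div (k n : ℕ) :
    (ArithmeticFunction.sigma k n : ℤ) = ∑ e ∈ n.divisors, (e : ℤ)^k := by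
  rw [ArithmeticFunction.sigma_apply]
  push_cast
  rfl

/-- `11 σ₉(n) = 21 σ₅(n) - 10 σ₃(n) + 5040 ∑_{m=1}^{n-1} σ₃(m) σ₅(n-m)`
for every positive integer `n`. -/
theorem sigma_nine_eq (n : ℕ) (hn : 0 < n) :
    (11 : ℤ) * ArithmeticFunction.sigma 9 n = 21 * ArithmeticFunction.sigma 5 n - 10 * ArithmeticFunction.sigma 3 n +
      5040 * ∑ m ∈ Finset.Ico 1 n, (ArithmeticFunction.sigma 3 m : ℤ) * ArithmeticFunction.sigma 5 (n - m) := by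
  set W : ℤ := ∑ m ∈ Finset.Ico 1 n, (ArithmeticFunction.sigma 3 m : ℤ) * ArithmeticFunction.sigma 5 (n - m) with hW
  -- the quadruple-sum form of the convolution
  have h1 : ∑ p ∈ sQuad n, (p.1 : ℤ)^3 * (p.2.2.1 : ℤ)^5 = W := by
    rw [sum_sQuad_conv n (fun d => (d:ℤ)^3) (fun d => (d:ℤ)^5), hW]
    refine Finset.sum_congr rfl fun m _ => ?_
    rw [sigma_cast_eq 3 m, sigma_cast_eq 5 (n - m)]
  -- the magic polynomial
  set M : ℕ × ℕ × ℕ × ℕ → ℤ := fun p =>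
    (p.2.1:ℤ)^2*(p.2.2.2:ℤ)^6 + 3*(p.2.1:ℤ)^3*(p.2.2.2:ℤ)^5 + 2*(p.2.1:ℤ)^4*(p.2.2.2:ℤ)^4
      - (p.1:ℤ)^2*(p.2.2.1:ℤ)^6 + 3*(p.1:ℤ)^3*(p.2.2.1:ℤ)^5 - 2*(p.1:ℤ)^4*(p.2.2.1:ℤ)^4
    with hM
  -- ∑ M = 6 W  via the (a,x,b,y) ↦ (x,a,y,b) symmetry
  have h2 : ∑ p ∈ sQuad n, M p = 6 * W := by
    have ht := sum_sQuad_tau n (fun p =>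
      (p.1:ℤ)^2*(p.2.2.1:ℤ)^6 + 3*(p.1:ℤ)^3*(p.2.2.1:ℤ)^5 + 2*(p.1:ℤ)^4*(p.2.2.1:ℤ)^4)
    have hsplit : ∑ p ∈ sQuad n, M p
        = ∑ p ∈ sQuad n, ((p.2.1:ℤ)^2*(p.2.2.2:ℤ)^6 + 3*(p.2.1:ℤ)^3*(p.2.2.2:ℤ)^5
            + 2*(p.2.1:ℤ)^4*(p.2.2.2:ℤ)^4)
          - ∑ p ∈ sQuad n, ((p.1:ℤ)^2*(p.2.2.1:ℤ)^6 - 3*(p.1:ℤ)^3*(p.2.2.1:ℤ)^5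
            + 2*(p.1:ℤ)^4*(p.2.2.1:ℤ)^4) := by
      rw [← Finset.sum_sub_distrib]
      refine Finset.sum_congr rfl fun p _ => ?_
      rw [hM]; ring
    rw [hsplit, ← ht, ← Finset.sum_sub_distrib, ← h1, Finset.mul_sum]
    refine Finset.sum_congr rfl fun p _ => ?_
    ring
  -- ∑ M over sQuad equals the diagonal sum
  have h5 : ∑ p ∈ (sQuad n).filter (fun p => p.2.2.1 < p.1), M p
      + ∑ p ∈ (sQuad n).filter (fun p => p.2.2.1 < p.1),
          M (p.2.2.1, p.2.2.2, p.1, p.2.1) = 0 := by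
    have hpt : ∑ p ∈ (sQuad n).filter (fun p => p.2.2.1 < p.1),
        (M p + M (p.2.2.1, p.2.2.2, p.1, p.2.1))
        = ∑ p ∈ (sQuad n).filter (fun p => p.2.2.1 < p.1),
          (((p.2.1:ℤ)^2*(p.2.2.2:ℤ)^6 + (p.2.1:ℤ)^6*(p.2.2.2:ℤ)^2
            + 3*(p.2.1:ℤ)^3*(p.2.2.2:ℤ)^5 + 3*(p.2.1:ℤ)^5*(p.2.2.2:ℤ)^3
            + 4*(p.2.1:ℤ)^4*(p.2.2.2:ℤ)^4)
          - ((p.1:ℤ)^6*(p.2.2.1:ℤ)^2 - 3*(p.1:ℤ)^5*(p.2.2.1:ℤ)^3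
            + 4*(p.1:ℤ)^4*(p.2.2.1:ℤ)^4 - 3*(p.1:ℤ)^3*(p.2.2.1:ℤ)^5
            + (p.1:ℤ)^2*(p.2.2.1:ℤ)^6)) := by
      refine Finset.sum_congr rfl fun p _ => ?_
      rw [hM]; ring
    have hchi := sum_sQuad_chi n (fun p =>
      (p.1:ℤ)^6*(p.2.2.1:ℤ)^2 - 3*(p.1:ℤ)^5*(p.2.2.1:ℤ)^3 + 4*(p.1:ℤ)^4*(p.2.2.1:ℤ)^4
        - 3*(p.1:ℤ)^3*(p.2.2.1:ℤ)^5 + (p.1:ℤ)^2*(p.2.2.1:ℤ)^6)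
    have hchi2 : ∑ p ∈ (sQuad n).filter (fun p => p.2.2.1 < p.1),
        ((p.1:ℤ)^6*(p.2.2.1:ℤ)^2 - 3*(p.1:ℤ)^5*(p.2.2.1:ℤ)^3 + 4*(p.1:ℤ)^4*(p.2.2.1:ℤ)^4
          - 3*(p.1:ℤ)^3*(p.2.2.1:ℤ)^5 + (p.1:ℤ)^2*(p.2.2.1:ℤ)^6)
        = ∑ p ∈ (sQuad n).filter (fun p => p.2.2.1 < p.1),
          ((p.2.1:ℤ)^2*(p.2.2.2:ℤ)^6 + (p.2.1:ℤ)^6*(p.2.2.2:ℤ)^2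
            + 3*(p.2.1:ℤ)^3*(p.2.2.2:ℤ)^5 + 3*(p.2.1:ℤ)^5*(p.2.2.2:ℤ)^3
            + 4*(p.2.1:ℤ)^4*(p.2.2.2:ℤ)^4) := by
      rw [hchi]
      refine Finset.sum_congr rfl fun p _ => ?_
      push_cast
      ring
    rw [← Finset.sum_add_distrib, hpt, Finset.sum_sub_distrib, hchi2]
    ring
  have h6 : ∑ p ∈ sQuad n, M p
      = ∑ p ∈ (sQuad n).filter (fun p => p.1 = p.2.2.1), M p := by
    rw [sum_sQuad_split n M, sum_sQuad_LT n M]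
    linarith [h5]
  -- evaluate the diagonal
  have h7 : 840 * ∑ p ∈ sQuad n, M p
      = 11 * (ArithmeticFunction.sigma 9 n : ℤ) - 21 * ArithmeticFunction.sigma 5 n
        + 10 * ArithmeticFunction.sigma 3 n := by
    rw [h6, sum_sQuad_EQ n hn M, Finset.mul_sum]
    have hinner : ∀ e ∈ n.divisors,
        840 * ∑ x ∈ Ico 1 e, M (n / e, x, n / e, e - x)
          = 11*(e:ℤ)^9 - 21*(e:ℤ)^5 + 10*(e:ℤ)^3 := by
      intro e _
      rw [← inner_eval e]
      congr 1
      refine Finset.sum_congr rfl fun x _ => ?_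
      rw [hM]
      ring
    rw [Finset.sum_congr rfl hinner]
    rw [sigma_cast_div 9 n, sigma_cast_div 5 n, sigma_cast_div 3 n]
    rw [Finset.mul_sum, Finset.mul_sum, Finset.mul_sum]
    rw [← Finset.sum_sub_distrib, ← Finset.sum_add_distrib]
  rw [h2] at h7
  linarith [h7]
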